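/- Let W ∈ ℂ[x_1,…,x_n] be a polynomial and let γ be a diagonal matrix acting on ℂⁿ with γ*W = W (i.e. W(γ·x) = W(x)). Let 𝔪_γ be the ideal generated by the variables x_j with γ_j ≠ 1, and write W = W_γ + f where W_γ = W|_{ℂⁿ_γ} (the sum of monomials in the fixed variables) and f ∈ 𝔪_γ. Then f ∈ (𝔪_γ)², and consequently for every j, the restriction to ℂⁿ_γ of ∂W/∂x_j equals ∂W_γ/∂x_j on ℂⁿ_γ (interpreting W_γ as a polynomial in the fixed variables, with ∂W_γ/∂x_j = 0 for non-fixed x_j). -/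

import Mathlib

open MvPolynomial

/-- The part of a polynomial `W` obtained by setting the non-fixed variables
(those with `γ_j ≠ 1`) to zero, i.e. the sum of the monomials of `W` involving only
the fixed variables: this is `W_γ = W|_{ℂⁿ_γ}`. -/
noncomputable def fixedPart (n : ℕ) (γ : Fin n → ℂ) (W : MvPolynomial (Fin n) ℂ) :
    MvPolynomial (Fin n) ℂ :=
  MvPolynomial.aeval (fun j => if γ j = 1 then (MvPolynomial.X j : MvPolynomial (Fin n) ℂ) else 0) W


section aux
variable {n : ℕ} (γ : Fin n → ℂ)

lemma scale_monomial (u : Fin n →₀ ℕ) (a : ℂ) :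
    aeval (fun j => C (γ j) * X j) (monomial u a)
      = monomial u ((∏ j, γ j ^ u j) * a) := by
  rw [aeval_monomial, monomial_eq,
      Finsupp.prod_fintype _ _ (fun i => pow_zero _),
      Finsupp.prod_fintype _ _ (fun i => pow_zero _)]
  simp only [mul_pow, ← C_pow, Finset.prod_mul_distrib, ← map_prod, algebraMap_eq, map_mul]
  ring

lemma fixedPart_monomial (u : Fin n →₀ ℕ) (a : ℂ) :
    aeval (fun j => if γ j = 1 then (X j : MvPolynomial (Fin n) ℂ) else 0) (monomial u a)
      = if ∀ j, γ j ≠ 1 → u j = 0 then monomial u a else 0 := by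
  rw [aeval_monomial, Finsupp.prod_fintype _ _ (fun i => pow_zero _)]
  by_cases h : ∀ j, γ j ≠ 1 → u j = 0
  · rw [if_pos h, monomial_eq, Finsupp.prod_fintype _ _ (fun i => pow_zero _), algebraMap_eq]
    congr 1
    apply Finset.prod_congr rfl
    intro j _
    by_cases hj : γ j = 1
    · rw [if_pos hj]
    · rw [h j hj, pow_zero, pow_zero]
  · rw [if_neg h]
    push_neg at h
    obtain ⟨j, hj, hu⟩ := h
    rw [Finset.prod_eq_zero (Finset.mem_univ j) (by rw [if_neg hj, zero_pow hu]), mul_zero]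

lemma coeff_scale (W : MvPolynomial (Fin n) ℂ) (d : Fin n →₀ ℕ) :
    coeff d (aeval (fun j => C (γ j) * X j) W) = (∏ j, γ j ^ d j) * coeff d W := by
  induction W using MvPolynomial.induction_on' with
  | monomial u a =>
    rw [scale_monomial]
    rcases eq_or_ne u d with rfl | h
    · simp [coeff_monomial, mul_comm]
    · simp [coeff_monomial, h]
  | add p q hp hq => rw [map_add, coeff_add, hp, hq, coeff_add, mul_add]

lemma coeff_fixedPart' (W : MvPolynomial (Fin n) ℂ) (d : Fin n →₀ ℕ) :
    coeff d (aeval (fun j => if γ j = 1 then (X j : MvPolynomial (Fin n) ℂ) else 0) W)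
      = if ∀ j, γ j ≠ 1 → d j = 0 then coeff d W else 0 := by
  induction W using MvPolynomial.induction_on' with
  | monomial u a =>
    rw [fixedPart_monomial]
    rcases eq_or_ne u d with rfl | h
    · split_ifs <;> simp [coeff_monomial]
    · split_ifs <;> simp [coeff_monomial, h]
  | add p q hp hq =>
    simp only [map_add, coeff_add, hp, hq]
    split_ifs <;> simp

end aux

section inv
variable {n : ℕ} {γ : Fin n → ℂ} {W : MvPolynomial (Fin n) ℂ}

lemma scaled_eq (hinv : ∀ x : Fin n → ℂ,
    MvPolynomial.eval (fun j => γ j * x j) W = MvPolynomial.eval x W) :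
    aeval (fun j => C (γ j) * X j) W = W := by
  apply MvPolynomial.funext
  intro x
  rw [aeval_eq_bind₁]
  rw [show (eval x : MvPolynomial (Fin n) ℂ →+* ℂ) = eval₂Hom (RingHom.id ℂ) x from rfl]
  rw [eval₂Hom_bind₁]
  simp only [map_mul, eval₂Hom_C, eval₂Hom_X', RingHom.id_apply]
  exact hinv x

lemma prod_eq_one (hinv : ∀ x : Fin n → ℂ,
    MvPolynomial.eval (fun j => γ j * x j) W = MvPolynomial.eval x W)
    (d : Fin n →₀ ℕ) (hd : coeff d W ≠ 0) : ∏ j, γ j ^ d j = 1 := by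
  have h := congrArg (coeff d) (scaled_eq hinv)
  rw [coeff_scale] at h
  exact mul_right_cancel₀ hd (h.trans (one_mul _).symm)

end inv

section mem
variable {n : ℕ} {γ : Fin n → ℂ}

lemma X_mem (j : Fin n) (hj : γ j ≠ 1) :
    (X j : MvPolynomial (Fin n) ℂ) ∈
      Ideal.span {P : MvPolynomial (Fin n) ℂ | ∃ j, γ j ≠ 1 ∧ P = X j} :=
  Ideal.subset_span ⟨j, hj, rfl⟩

lemma monomial_mem_sq (d : Fin n →₀ ℕ) (c : ℂ)
    (h2 : 2 ≤ ∑ j ∈ Finset.univ.filter (fun j => γ j ≠ 1), d j) :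
    (monomial d c : MvPolynomial (Fin n) ℂ) ∈
      (Ideal.span {P : MvPolynomial (Fin n) ℂ | ∃ j, γ j ≠ 1 ∧ P = X j}) ^ 2 := by
  have hex : ∃ j ∈ Finset.univ.filter (fun j => γ j ≠ 1), d j ≠ 0 := by
    by_contra h
    push_neg at h
    have h0 : ∑ j ∈ Finset.univ.filter (fun j => γ j ≠ 1), d j = 0 := Finset.sum_eq_zero h
    omega
  obtain ⟨j, hjF, hdj⟩ := hex
  have hj : γ j ≠ 1 := (Finset.mem_filter.mp hjF).2
  by_cases h2j : 2 ≤ d j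
  · have hle : Finsupp.single j 2 ≤ d := by
      rw [Finsupp.single_le_iff]; exact h2j
    obtain ⟨e, he⟩ : ∃ e, d = Finsupp.single j 2 + e :=
      ⟨d - Finsupp.single j 2, (add_tsub_cancel_of_le hle).symm⟩
    rw [he, monomial_single_add]
    exact Ideal.mul_mem_right _ _ (Ideal.pow_mem_pow (X_mem j hj) 2)
  · have hsum' := Finset.add_sum_erase _ d hjF
    have hex' : ∃ j' ∈ (Finset.univ.filter (fun j => γ j ≠ 1)).erase j, d j' ≠ 0 := by
      by_contra h
      push_neg at h
      have h0 : ∑ j' ∈ (Finset.univ.filter (fun j => γ j ≠ 1)).erase j, d j' = 0 :=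
        Finset.sum_eq_zero h
      omega
    obtain ⟨j', hj'E, hdj'⟩ := hex'
    have hne : j' ≠ j := (Finset.mem_erase.mp hj'E).1
    have hj' : γ j' ≠ 1 := (Finset.mem_filter.mp (Finset.mem_erase.mp hj'E).2).2
    have hle : Finsupp.single j 1 + Finsupp.single j' 1 ≤ d := by
      rw [Finsupp.le_def]
      intro i
      simp only [Finsupp.add_apply, Finsupp.single_apply]
      rcases eq_or_ne i j with rfl | hij
      · simp [hne]
        omega
      · rcases eq_or_ne i j' with rfl | hij'
        · simp [Ne.symm hij]
          omega
        · simp [Ne.symm hij, Ne.symm hij']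
    obtain ⟨e, he⟩ : ∃ e, d = Finsupp.single j 1 + (Finsupp.single j' 1 + e) :=
      ⟨d - (Finsupp.single j 1 + Finsupp.single j' 1), by
        rw [← add_assoc]; exact (add_tsub_cancel_of_le hle).symm⟩
    rw [he, monomial_single_add, monomial_single_add, pow_one, pow_one, ← mul_assoc]
    exact Ideal.mul_mem_right _ _
      (by rw [sq]; exact Ideal.mul_mem_mul (X_mem j hj) (X_mem j' hj'))

lemma poly_mem_sq (p : MvPolynomial (Fin n) ℂ)
    (hp : ∀ d ∈ p.support, 2 ≤ ∑ j ∈ Finset.univ.filter (fun j => γ j ≠ 1), d j) :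
    p ∈ (Ideal.span {P : MvPolynomial (Fin n) ℂ | ∃ j, γ j ≠ 1 ∧ P = X j}) ^ 2 := by
  nth_rewrite 1 [p.as_sum]
  exact Ideal.sum_mem _ (fun d hd => monomial_mem_sq d _ (hp d hd))

end mem

/-- If `γ` is a diagonal matrix with `W(γ·x) = W(x)`, and `W = W_γ + f` with `W_γ` the sum of
monomials in the fixed variables, then `f` lies in the square of the ideal `𝔪_γ` generated by
the non-fixed variables; consequently, for every `j`, the restriction to the fixed subspace
`ℂⁿ_γ` of `∂W/∂x_j` equals that of `∂W_γ/∂x_j`. -/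
theorem invariant_poly_correction_in_square (n : ℕ) (γ : Fin n → ℂ)
    (W : MvPolynomial (Fin n) ℂ)
    (hinv : ∀ x : Fin n → ℂ, MvPolynomial.eval (fun j => γ j * x j) W = MvPolynomial.eval x W) :
    (W - fixedPart n γ W) ∈
      (Ideal.span {P : MvPolynomial (Fin n) ℂ | ∃ j, γ j ≠ 1 ∧ P = MvPolynomial.X j}) ^ 2 ∧
    ∀ (j : Fin n) (x : Fin n → ℂ), (∀ j', γ j' ≠ 1 → x j' = 0) →
      MvPolynomial.eval x (MvPolynomial.pderiv j W)
        = MvPolynomial.eval x (MvPolynomial.pderiv j (fixedPart n γ W)) := by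
  have hmem : (W - fixedPart n γ W) ∈
      (Ideal.span {P : MvPolynomial (Fin n) ℂ | ∃ j, γ j ≠ 1 ∧ P = MvPolynomial.X j}) ^ 2 := by
    apply poly_mem_sq
    intro d hd
    have hcd : coeff d (W - fixedPart n γ W) ≠ 0 := by
      rwa [MvPolynomial.mem_support_iff] at hd
    have hcoeff : coeff d (fixedPart n γ W)
        = if ∀ j, γ j ≠ 1 → d j = 0 then coeff d W else 0 := coeff_fixedPart' γ W d
    by_cases hP : ∀ j, γ j ≠ 1 → d j = 0
    · exact absurd (by rw [coeff_sub, hcoeff, if_pos hP, sub_self]) hcd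
    · have hW : coeff d W ≠ 0 := by
        intro h0
        exact hcd (by rw [coeff_sub, hcoeff, if_neg hP, h0, sub_zero])
      push_neg at hP
      obtain ⟨j, hj, hdj⟩ := hP
      have hjF : j ∈ Finset.univ.filter (fun j => γ j ≠ 1) := by simp [hj]
      by_contra hlt
      push_neg at hlt
      have hprod := prod_eq_one hinv d hW
      have hsplit : ∏ j', γ j' ^ d j'
          = ∏ j' ∈ Finset.univ.filter (fun j => γ j ≠ 1), γ j' ^ d j' := by
        rw [← Finset.prod_filter_mul_prod_filter_not Finset.univ (fun j => γ j ≠ 1)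
              (fun j' => γ j' ^ d j')]
        have h1 : ∏ j' ∈ Finset.univ.filter (fun j => ¬ γ j ≠ 1), γ j' ^ d j' = 1 := by
          apply Finset.prod_eq_one
          intro i hi
          rw [Finset.mem_filter] at hi
          rw [not_not.mp hi.2, one_pow]
        rw [h1, mul_one]
      have hsum := Finset.add_sum_erase _ d hjF
      have hdj1 : d j = 1 ∧ ∑ i ∈ (Finset.univ.filter (fun j => γ j ≠ 1)).erase j, d i = 0 := by
        omega
      have hrest := (Finset.sum_eq_zero_iff).mp hdj1.2
      have hfil : ∏ j' ∈ Finset.univ.filter (fun j => γ j ≠ 1), γ j' ^ d j' = γ j := by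
        rw [← Finset.mul_prod_erase _ _ hjF, hdj1.1, pow_one,
            Finset.prod_eq_one (fun i hi => by rw [hrest i hi, pow_zero]), mul_one]
      exact hj (by rw [← hfil, ← hsplit, hprod])
  refine ⟨hmem, ?_⟩
  intro j x hx
  have hI0 : ∀ a ∈ Ideal.span {P : MvPolynomial (Fin n) ℂ | ∃ j, γ j ≠ 1 ∧ P = MvPolynomial.X j},
      eval x a = 0 := by
    intro a ha
    refine Submodule.span_induction ?_ ?_ ?_ ?_ ha
    · rintro p ⟨j', hj', rfl⟩
      simpa using hx j' hj'
    · exact map_zero _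
    · intro p q _ _ hp hq
      rw [map_add, hp, hq, add_zero]
    · intro r p _ hp
      rw [smul_eq_mul, map_mul, hp, mul_zero]
  have h0 : eval x (pderiv j (W - fixedPart n γ W)) = 0 := by
    rw [sq] at hmem
    refine Submodule.mul_induction_on hmem (fun a ha b hb => ?_) (fun p q hp hq => ?_)
    · rw [pderiv_mul, map_add, map_mul, map_mul, hI0 a ha, hI0 b hb, mul_zero, zero_mul,
        add_zero]
    · rw [map_add, map_add, hp, hq, add_zero]
  rw [map_sub, map_sub] at h0
  exact sub_eq_zero.mp h0
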